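/- Let γ be a nonzero real number and let p_n : ℝ → ℝ be defined by p_{2n}(x) = ((−γ)^n/√(n!))·C_n(x²; γ²) and p_{2n+1}(x) = −((−γ)^{n−1}/√(n!))·x·C_n(x²−1; γ²). Then for all integers m, n ≥ 0 the following discrete orthogonality relation holds: Σ_{k=0}^{∞} (γ^{2k}/(2·k!))·( p_n(√k)·p_m(√k) + p_n(−√k)·p_m(−√k) ) = e^{γ²}·δ_{mn}, where the sum over k is an absolutely convergent infinite series and δ_{mn} is the Kronecker delta. -/

import Mathlib

open Finset Nat

noncomputable def ff (x : ℝ) (s : ℕ) : ℝ := ∏ j ∈ Finset.range s, (x - (j : ℝ))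

lemma ff_zero (x : ℝ) : ff x 0 = 1 := by simp [ff]

lemma ff_succ (x : ℝ) (s : ℕ) : ff x (s + 1) = ff x s * (x - s) := by
  simp [ff, Finset.prod_range_succ]

lemma ff_nat (k s : ℕ) : ff (k : ℝ) s = (k.descFactorial s : ℝ) := by
  induction s with
  | zero => simp [ff]
  | succ s ih =>
    rw [ff_succ, ih, Nat.descFactorial_succ]
    rcases le_or_gt s k with h | h
    · push_cast [h]; ring
    · rw [Nat.descFactorial_of_lt h]
      have : k - s = 0 := by omega
      simp [this]

lemma ff_nat_nonneg (k s : ℕ) : 0 ≤ ff (k : ℝ) s := by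
  rw [ff_nat]; positivity

lemma key_coef (j t : ℕ) :
    (j.choose t : ℝ) * (t ! : ℝ) * ((j : ℝ) - t) = (j.choose (t + 1) : ℝ) * ((t + 1)! : ℝ) := by
  rcases le_or_gt t j with h | h
  · have h1 : (j.choose t : ℝ) * (t ! : ℝ) = (j.descFactorial t : ℝ) := by
      rw [Nat.descFactorial_eq_factorial_mul_choose]; push_cast; ring
    have h2 : (j.choose (t + 1) : ℝ) * ((t + 1)! : ℝ) = (j.descFactorial (t + 1) : ℝ) := by
      rw [Nat.descFactorial_eq_factorial_mul_choose]; push_cast; ring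
    rw [h1, h2, Nat.descFactorial_succ]
    push_cast [h]; ring
  · rw [Nat.choose_eq_zero_of_lt h, Nat.choose_eq_zero_of_lt (by omega)]
    push_cast; ring

lemma vander (x : ℝ) (j : ℕ) : ∀ i : ℕ, ff x i * ff x j =
    ∑ s ∈ Finset.range (i + 1),
      (i.choose s : ℝ) * (j.choose (i - s) : ℝ) * ((i - s)! : ℝ) * ff x (j + s) := by
  intro i
  induction i with
  | zero => simp [ff_zero]
  | succ i ih =>
    have lhs1 : ff x (i + 1) * ff x j = (ff x i * ff x j) * (x - i) := by
      rw [ff_succ]; ring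
    rw [lhs1, ih, Finset.sum_mul]
    have split : ∀ s ∈ Finset.range (i + 1),
        (i.choose s : ℝ) * (j.choose (i - s) : ℝ) * ((i - s)! : ℝ) * ff x (j + s) * (x - i) =
        (i.choose s : ℝ) * (j.choose (i - s) : ℝ) * ((i - s)! : ℝ) * ff x (j + s + 1)
          + (i.choose s : ℝ) * (j.choose (i + 1 - s) : ℝ) * ((i + 1 - s)! : ℝ) * ff x (j + s) := by
      intro s hs
      rw [Finset.mem_range] at hs
      have hsi : s ≤ i := by omega
      have h1 : ff x (j + s + 1) = ff x (j + s) * (x - (j + s : ℕ)) := ff_succ x (j + s)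
      have h2 : (x - (i:ℝ)) = (x - ((j:ℝ) + s)) + ((j:ℝ) + s - i) := by ring
      have h3 : ((j:ℝ) + s - i) = (j:ℝ) - ((i - s : ℕ) : ℝ) := by
        push_cast [hsi]; ring
      have h4 : (j.choose (i - s) : ℝ) * ((i - s)! : ℝ) * ((j:ℝ) - ((i - s : ℕ) : ℝ))
          = (j.choose (i - s + 1) : ℝ) * (((i - s) + 1)! : ℝ) := key_coef j (i - s)
      have h5 : i - s + 1 = i + 1 - s := by omega
      rw [h5] at h4
      rw [h2, mul_add, h1, h3]
      push_cast
      linear_combination ((i.choose s : ℝ) * ff x (j + s)) * h4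
    rw [Finset.sum_congr rfl split, Finset.sum_add_distrib]
    -- second sum: extend to range (i+2) since coefficient at s = i+1 is 0
    have ext2 : ∑ s ∈ Finset.range (i + 1),
        (i.choose s : ℝ) * (j.choose (i + 1 - s) : ℝ) * ((i + 1 - s)! : ℝ) * ff x (j + s)
        = ∑ s ∈ Finset.range (i + 2),
        (i.choose s : ℝ) * (j.choose (i + 1 - s) : ℝ) * ((i + 1 - s)! : ℝ) * ff x (j + s) := by
      rw [Finset.sum_range_succ (n := i + 1)]
      simp [Nat.choose_succ_self]
    rw [ext2]
    rw [Finset.sum_range_succ' (fun s => (i.choose s : ℝ) * (j.choose (i + 1 - s) : ℝ)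
        * ((i + 1 - s)! : ℝ) * ff x (j + s)) (i + 1)]
    rw [Finset.sum_range_succ' (fun s => ((i+1).choose s : ℝ) * (j.choose (i + 1 - s) : ℝ)
        * ((i + 1 - s)! : ℝ) * ff x (j + s)) (i + 1)]
    rw [← add_assoc, ← Finset.sum_add_distrib]
    congr 1
    · apply Finset.sum_congr rfl
      intro s hs
      rw [Finset.mem_range] at hs
      have : (i+1).choose (s+1) = i.choose s + i.choose (s+1) := Nat.choose_succ_succ i s
      have h6 : i + 1 - (s + 1) = i - s := by omega
      rw [this, h6]
      push_cast
      ring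
    · simp

lemma exp_tsum (a : ℝ) : ∑' n : ℕ, a ^ n / (n ! : ℝ) = Real.exp a := by
  rw [Real.exp_eq_exp_ℝ, NormedSpace.exp_eq_tsum_div]

lemma ff_shift (a : ℝ) (s k : ℕ) :
    a ^ (k + s) / ((k + s)! : ℝ) * ff ((k + s : ℕ) : ℝ) s = a ^ s * (a ^ k / (k ! : ℝ)) := by
  rw [ff_nat]
  have hd : (k ! : ℝ) * ((k + s).descFactorial s : ℝ) = ((k + s)! : ℝ) := by
    have := Nat.factorial_mul_descFactorial (Nat.le_add_left s k)
    rw [Nat.add_sub_cancel] at this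
    exact_mod_cast this
  have hD : ((k + s).descFactorial s : ℝ) ≠ 0 := by
    have : ¬ (k + s < s) := by omega
    simpa [Nat.descFactorial_eq_zero_iff_lt] using
      (Nat.cast_ne_zero (R := ℝ)).2 (fun h => this (Nat.descFactorial_eq_zero_iff_lt.1 h))
  have hk : (k ! : ℝ) ≠ 0 := Nat.cast_ne_zero.2 (Nat.factorial_ne_zero k)
  rw [← hd]
  field_simp
  ring

lemma summable_ff (a : ℝ) (s : ℕ) : Summable (fun k : ℕ => a ^ k / (k ! : ℝ) * ff k s) := by
  rw [← summable_nat_add_iff s]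
  exact ((Real.summable_pow_div_factorial a).mul_left (a ^ s)).congr
    (fun k => (ff_shift a s k).symm)

lemma tsum_ff (a : ℝ) (s : ℕ) :
    ∑' k : ℕ, a ^ k / (k ! : ℝ) * ff k s = Real.exp a * a ^ s := by
  have hs := summable_ff a s
  have h := Summable.sum_add_tsum_nat_add (f := fun k : ℕ => a ^ k / (k ! : ℝ) * ff k s) s hs
  have h0 : ∑ i ∈ Finset.range s, a ^ i / (i ! : ℝ) * ff i s = 0 := by
    apply Finset.sum_eq_zero
    intro i hi
    rw [Finset.mem_range] at hi
    rw [ff_nat, Nat.descFactorial_of_lt hi]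
    simp
  rw [h0, zero_add] at h
  rw [← h]
  calc ∑' k : ℕ, a ^ (k + s) / ((k + s)! : ℝ) * ff ((k + s : ℕ) : ℝ) s
      = ∑' k : ℕ, a ^ s * (a ^ k / (k ! : ℝ)) := tsum_congr (ff_shift a s)
    _ = a ^ s * ∑' k : ℕ, a ^ k / (k ! : ℝ) := tsum_mul_left
    _ = Real.exp a * a ^ s := by rw [exp_tsum]; ring

lemma summable_ff2 (a : ℝ) (i j : ℕ) :
    Summable (fun k : ℕ => a ^ k / (k ! : ℝ) * (ff k i * ff k j)) := by
  have : (fun k : ℕ => a ^ k / (k ! : ℝ) * (ff k i * ff k j))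
      = fun k : ℕ => ∑ s ∈ Finset.range (i + 1),
          (i.choose s : ℝ) * (j.choose (i - s) : ℝ) * ((i - s)! : ℝ)
            * (a ^ k / (k ! : ℝ) * ff k (j + s)) := by
    funext k
    rw [vander (k : ℝ) j i, Finset.mul_sum]
    exact Finset.sum_congr rfl (fun s _ => by ring)
  rw [this]
  exact summable_sum (fun s _ => (summable_ff a (j + s)).mul_left _)

lemma tsum_ff2 (a : ℝ) (i j : ℕ) :
    ∑' k : ℕ, a ^ k / (k ! : ℝ) * (ff k i * ff k j)
      = Real.exp a * ∑ s ∈ Finset.range (i + 1),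
          (i.choose s : ℝ) * (j.choose (i - s) : ℝ) * ((i - s)! : ℝ) * a ^ (j + s) := by
  have hpt : ∀ k : ℕ, a ^ k / (k ! : ℝ) * (ff k i * ff k j)
      = ∑ s ∈ Finset.range (i + 1),
          (i.choose s : ℝ) * (j.choose (i - s) : ℝ) * ((i - s)! : ℝ)
            * (a ^ k / (k ! : ℝ) * ff k (j + s)) := by
    intro k
    rw [vander (k : ℝ) j i, Finset.mul_sum]
    exact Finset.sum_congr rfl (fun s _ => by ring)
  rw [tsum_congr hpt, Summable.tsum_finsetSum (fun s _ => ((summable_ff a (j + s)).mul_left _))]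
  rw [Finset.mul_sum]
  apply Finset.sum_congr rfl
  intro s _
  rw [tsum_mul_left, tsum_ff]
  ring
/-- The Charlier polynomial `C_n(x; a) = ₂F₀(-n, -x; —; -1/a)
  = ∑_{k=0}^{n} (n choose k)·x(x-1)⋯(x-k+1)·(-1/a)^k`,
  regarded as a polynomial function of a real variable `x`. -/
noncomputable def charlier (a : ℝ) (n : ℕ) (x : ℝ) : ℝ :=
  ∑ k ∈ Finset.range (n + 1),
    (n.choose k : ℝ) * (∏ j ∈ Finset.range k, (x - (j : ℝ))) * (-1 / a) ^ k

lemma charlier_apply (a : ℝ) (n : ℕ) (x : ℝ) :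
    charlier a n x = ∑ i ∈ Finset.range (n + 1), (n.choose i : ℝ) * ff x i * (-1 / a) ^ i := rfl

lemma alt_sum (n t : ℕ) :
    ∑ i ∈ Finset.range (n + 1), (-1 : ℝ) ^ i * (n.choose i : ℝ) * (i.choose t : ℝ)
      = if t = n then (-1 : ℝ) ^ n else 0 := by
  rcases lt_or_ge n t with h | h
  · rw [if_neg (by omega)]
    apply Finset.sum_eq_zero
    intro i hi; rw [Finset.mem_range] at hi
    rw [Nat.choose_eq_zero_of_lt (show i < t by omega)]; ring
  · have hsub : Finset.Ico t (n + 1) ⊆ Finset.range (n + 1) := by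
      intro x hx; rw [Finset.mem_Ico] at hx; rw [Finset.mem_range]; omega
    have hzero : ∀ i ∈ Finset.range (n + 1), i ∉ Finset.Ico t (n + 1) →
        (-1 : ℝ) ^ i * (n.choose i : ℝ) * (i.choose t : ℝ) = 0 := by
      intro i hi hni
      rw [Finset.mem_range] at hi; rw [Finset.mem_Ico] at hni
      have : i < t := by omega
      rw [Nat.choose_eq_zero_of_lt this]; ring
    rw [← Finset.sum_subset hsub hzero, Finset.sum_Ico_eq_sum_range]
    have hnt : n + 1 - t = (n - t) + 1 := by omega
    rw [hnt]
    have hterm : ∀ i ∈ Finset.range ((n - t) + 1),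
        (-1 : ℝ) ^ (t + i) * (n.choose (t + i) : ℝ) * ((t + i).choose t : ℝ)
          = ((-1 : ℝ) ^ t * (n.choose t : ℝ)) * ((-1 : ℝ) ^ i * ((n - t).choose i : ℝ)) := by
      intro i hi; rw [Finset.mem_range] at hi
      have h1 : n.choose (t + i) * (t + i).choose t = n.choose t * (n - t).choose (t + i - t) :=
        Nat.choose_mul (by omega)
      rw [Nat.add_sub_cancel_left] at h1
      have h2 : ((n.choose (t + i) : ℝ)) * ((t + i).choose t : ℝ)
          = (n.choose t : ℝ) * ((n - t).choose i : ℝ) := by exact_mod_cast congrArg Nat.cast h1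
      rw [pow_add]
      linear_combination ((-1 : ℝ) ^ t * (-1 : ℝ) ^ i) * h2
    rw [Finset.sum_congr rfl hterm, ← Finset.mul_sum]
    have halt : ∑ i ∈ Finset.range ((n - t) + 1), (-1 : ℝ) ^ i * ((n - t).choose i : ℝ)
        = if n - t = 0 then 1 else 0 := by
      have := Int.alternating_sum_range_choose (n := n - t)
      have h2 := congrArg (Int.cast : ℤ → ℝ) this
      push_cast at h2
      convert h2 using 2 <;> try (split <;> simp)
    rw [halt]
    rcases eq_or_lt_of_le h with he | hl
    · subst he
      simp [Nat.choose_self]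
    · rw [if_neg (show ¬ (n - t = 0) by omega), if_neg (show ¬ (t = n) by omega)]
      ring

lemma summable_ff_charlier (a : ℝ) (i m : ℕ) :
    Summable (fun k : ℕ => a ^ k / (k ! : ℝ) * ff k i * charlier a m k) := by
  have : (fun k : ℕ => a ^ k / (k ! : ℝ) * ff k i * charlier a m k)
      = fun k : ℕ => ∑ j ∈ Finset.range (m + 1),
          ((m.choose j : ℝ) * (-1 / a) ^ j) * (a ^ k / (k ! : ℝ) * (ff k i * ff k j)) := by
    funext k
    rw [charlier_apply, Finset.mul_sum]
    exact Finset.sum_congr rfl (fun j _ => by ring)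
  rw [this]
  exact summable_sum (fun j _ => (summable_ff2 a i j).mul_left _)

lemma tsum_ff_charlier (a : ℝ) (ha : a ≠ 0) (i m : ℕ) :
    ∑' k : ℕ, a ^ k / (k ! : ℝ) * ff k i * charlier a m k
      = Real.exp a * (-1 : ℝ) ^ m * (m ! : ℝ) * (i.choose m : ℝ) * a ^ i / a ^ m := by
  have hpt : ∀ k : ℕ, a ^ k / (k ! : ℝ) * ff k i * charlier a m k
      = ∑ j ∈ Finset.range (m + 1),
          ((m.choose j : ℝ) * (-1 / a) ^ j) * (a ^ k / (k ! : ℝ) * (ff k i * ff k j)) := by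
    intro k
    rw [charlier_apply, Finset.mul_sum]
    exact Finset.sum_congr rfl (fun j _ => by ring)
  rw [tsum_congr hpt, Summable.tsum_finsetSum (fun j _ => ((summable_ff2 a i j).mul_left _))]
  have hterm : ∀ j ∈ Finset.range (m + 1),
      ∑' k : ℕ, ((m.choose j : ℝ) * (-1 / a) ^ j) * (a ^ k / (k ! : ℝ) * (ff k i * ff k j))
        = ∑ s ∈ Finset.range (i + 1),
            ((m.choose j : ℝ) * (-1 / a) ^ j) * (Real.exp a *
              ((i.choose s : ℝ) * (j.choose (i - s) : ℝ) * ((i - s)! : ℝ) * a ^ (j + s))) := by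
    intro j _
    rw [tsum_mul_left, tsum_ff2]
    try simp only [Finset.mul_sum]
    try exact Finset.sum_congr rfl (fun s _ => by ring)
  rw [Finset.sum_congr rfl hterm, Finset.sum_comm]
  have hinner : ∀ s ∈ Finset.range (i + 1),
      ∑ j ∈ Finset.range (m + 1),
          ((m.choose j : ℝ) * (-1 / a) ^ j) * (Real.exp a *
            ((i.choose s : ℝ) * (j.choose (i - s) : ℝ) * ((i - s)! : ℝ) * a ^ (j + s)))
        = Real.exp a * (i.choose s : ℝ) * ((i - s)! : ℝ) * a ^ s *
            (if i - s = m then (-1 : ℝ) ^ m else 0) := by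
    intro s _
    rw [← alt_sum m (i - s), Finset.mul_sum]
    apply Finset.sum_congr rfl
    intro j _
    have hj : (-1 / a) ^ j * a ^ j = (-1 : ℝ) ^ j := by
      rw [← mul_pow]; congr 1; field_simp
    rw [pow_add]
    calc (m.choose j : ℝ) * (-1 / a) ^ j * (Real.exp a *
            ((i.choose s : ℝ) * (j.choose (i - s) : ℝ) * ((i - s)! : ℝ) * (a ^ j * a ^ s)))
        = Real.exp a * (i.choose s : ℝ) * ((i - s)! : ℝ) * a ^ s *
            ((m.choose j : ℝ) * (j.choose (i - s) : ℝ)) * ((-1 / a) ^ j * a ^ j) := by ring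
      _ = _ := by rw [hj]; ring
  rw [Finset.sum_congr rfl hinner]
  rw [Finset.sum_eq_single (i - m)]
  · rcases le_or_gt m i with hmi | hmi
    · have h1 : i - (i - m) = m := by omega
      rw [h1, if_pos rfl, Nat.choose_symm hmi]
      have h2 : a ^ (i - m) = a ^ i / a ^ m := pow_sub₀ a ha hmi
      rw [h2]; ring
    · have h1 : i - (i - m) ≠ m := by omega
      rw [if_neg h1, Nat.choose_eq_zero_of_lt hmi]
      push_cast; ring
  · intro s hs hne
    rw [Finset.mem_range] at hs
    have : i - s ≠ m := by omega
    rw [if_neg this]; ring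
  · intro h
    exact absurd (Finset.mem_range.2 (by omega)) h

lemma charlier_orth_tsum (a : ℝ) (ha : a ≠ 0) (n m : ℕ) :
    ∑' k : ℕ, a ^ k / (k ! : ℝ) * (charlier a n k * charlier a m k)
      = Real.exp a * (n ! : ℝ) / a ^ n * (if m = n then 1 else 0) := by
  have hpt : ∀ k : ℕ, a ^ k / (k ! : ℝ) * (charlier a n k * charlier a m k)
      = ∑ i ∈ Finset.range (n + 1),
          ((n.choose i : ℝ) * (-1 / a) ^ i) * (a ^ k / (k ! : ℝ) * ff k i * charlier a m k) := by
    intro k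
    conv_lhs => rw [charlier_apply a n]
    rw [Finset.sum_mul, Finset.mul_sum]
    exact Finset.sum_congr rfl (fun i _ => by ring)
  rw [tsum_congr hpt, Summable.tsum_finsetSum (fun i _ => ((summable_ff_charlier a i m).mul_left _))]
  have hterm : ∀ i ∈ Finset.range (n + 1),
      ∑' k : ℕ, ((n.choose i : ℝ) * (-1 / a) ^ i) * (a ^ k / (k ! : ℝ) * ff k i * charlier a m k)
        = (Real.exp a * (-1 : ℝ) ^ m * (m ! : ℝ) / a ^ m) *
            ((-1 : ℝ) ^ i * (n.choose i : ℝ) * (i.choose m : ℝ)) := by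
    intro i _
    rw [tsum_mul_left, tsum_ff_charlier a ha]
    have hj : (-1 / a) ^ i * a ^ i = (-1 : ℝ) ^ i := by
      rw [← mul_pow]; congr 1; field_simp
    linear_combination ((n.choose i : ℝ) * Real.exp a * (-1 : ℝ) ^ m * (m ! : ℝ) * (i.choose m : ℝ) / a ^ m) * hj
  rw [Finset.sum_congr rfl hterm, ← Finset.mul_sum, alt_sum n m]
  rcases eq_or_ne m n with he | hne
  · subst he
    rw [if_pos rfl, if_pos rfl]
    have h1 : (-1 : ℝ) ^ m * (-1 : ℝ) ^ m = 1 := by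
      rw [← pow_add, ← two_mul, pow_mul]; norm_num
    linear_combination (Real.exp a * (m ! : ℝ) / a ^ m) * h1
  · rw [if_neg hne, if_neg hne]
    ring

lemma expand2 (a : ℝ) (n m k : ℕ) :
    a ^ k / (k ! : ℝ) * (charlier a n k * charlier a m k)
      = ∑ i ∈ Finset.range (n + 1), ∑ j ∈ Finset.range (m + 1),
          ((n.choose i : ℝ) * (-1 / a) ^ i) * ((m.choose j : ℝ) * (-1 / a) ^ j) *
            (a ^ k / (k ! : ℝ) * (ff k i * ff k j)) := by
  rw [charlier_apply a n, charlier_apply a m, Finset.sum_mul_sum, Finset.mul_sum]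
  apply Finset.sum_congr rfl
  intro i _
  rw [Finset.mul_sum]
  exact Finset.sum_congr rfl (fun j _ => by ring)

lemma charlier_orth_abs (a : ℝ) (ha : 0 < a) (n m : ℕ) :
    Summable (fun k : ℕ => |a ^ k / (k ! : ℝ) * (charlier a n k * charlier a m k)|) := by
  have hB : Summable (fun k : ℕ => ∑ i ∈ Finset.range (n + 1), ∑ j ∈ Finset.range (m + 1),
      |(n.choose i : ℝ) * (-1 / a) ^ i| * |(m.choose j : ℝ) * (-1 / a) ^ j| *
        (a ^ k / (k ! : ℝ) * (ff k i * ff k j))) :=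
    summable_sum (fun i _ => summable_sum (fun j _ => (summable_ff2 a i j).mul_left _))
  apply Summable.of_nonneg_of_le (fun k => abs_nonneg _) _ hB
  intro k
  rw [expand2]
  refine le_trans (Finset.abs_sum_le_sum_abs _ _) (Finset.sum_le_sum ?_)
  intro i _
  refine le_trans (Finset.abs_sum_le_sum_abs _ _) (Finset.sum_le_sum ?_)
  intro j _
  have hnn : 0 ≤ a ^ k / (k ! : ℝ) * (ff k i * ff k j) := by
    have h1 := ff_nat_nonneg k i
    have h2 := ff_nat_nonneg k j
    have : (0:ℝ) ≤ a ^ k / (k ! : ℝ) := by positivity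
    exact mul_nonneg this (mul_nonneg h1 h2)
  rw [abs_mul, abs_mul, abs_of_nonneg hnn]

lemma charlier_orth_summable (a : ℝ) (ha : 0 < a) (n m : ℕ) :
    Summable (fun k : ℕ => a ^ k / (k ! : ℝ) * (charlier a n k * charlier a m k)) :=
  (charlier_orth_abs a ha n m).of_abs

/-- Discrete orthogonality of the polynomials `p_n` (built from Charlier polynomials) on the
support `S = {±√k : k ∈ ℤ₊}` with weight `w(±√k) = γ^{2k}/(2·k!)` for `k ≥ 1` and `w(0) = 1`:
`∑_{k=0}^{∞} (γ^{2k}/(2·k!))·(p_n(√k)p_m(√k) + p_n(-√k)p_m(-√k)) = e^{γ²}·δ_{mn}`,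
the sum being an absolutely convergent series. -/
theorem charlier_p_orthogonality (γ : ℝ) (hγ : γ ≠ 0) (p : ℕ → ℝ → ℝ)
    (hpeven : ∀ (n : ℕ) (x : ℝ),
      p (2 * n) x = ((-γ) ^ n / Real.sqrt (n.factorial : ℝ)) * charlier (γ ^ 2) n (x ^ 2))
    (hpodd : ∀ (n : ℕ) (x : ℝ),
      p (2 * n + 1) x =
        -(((-γ) ^ ((n : ℤ) - 1) / Real.sqrt (n.factorial : ℝ)) * x *
          charlier (γ ^ 2) n (x ^ 2 - 1)))
    (m n : ℕ) :
    Summable (fun k : ℕ => |γ ^ (2 * k) / (2 * (k.factorial : ℝ)) *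
      (p n (Real.sqrt k) * p m (Real.sqrt k) + p n (-Real.sqrt k) * p m (-Real.sqrt k))|) ∧
    ∑' k : ℕ, γ ^ (2 * k) / (2 * (k.factorial : ℝ)) *
      (p n (Real.sqrt k) * p m (Real.sqrt k) + p n (-Real.sqrt k) * p m (-Real.sqrt k)) =
      Real.exp (γ ^ 2) * (if m = n then 1 else 0) := by
  have ha : (0:ℝ) < γ ^ 2 := by positivity
  have hane : (γ:ℝ) ^ 2 ≠ 0 := ne_of_gt ha
  have hsq : ∀ k : ℕ, (Real.sqrt k) ^ 2 = (k : ℝ) := fun k => Real.sq_sqrt (by positivity)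
  have hgam : ∀ k : ℕ, γ ^ (2 * k) = (γ ^ 2) ^ k := fun k => by rw [pow_mul]
  obtain ⟨u, hu | hu⟩ := Nat.even_or_odd' n <;> obtain ⟨v, hv | hv⟩ := Nat.even_or_odd' m <;>
    subst hu <;> subst hv
  -- case 1 : n = 2u, m = 2v
  · have hF : ∀ k : ℕ, γ ^ (2 * k) / (2 * (k.factorial : ℝ)) *
        (p (2*u) (Real.sqrt k) * p (2*v) (Real.sqrt k)
          + p (2*u) (-Real.sqrt k) * p (2*v) (-Real.sqrt k))
        = (((-γ) ^ u / Real.sqrt (u.factorial : ℝ)) * ((-γ) ^ v / Real.sqrt (v.factorial : ℝ)))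
          * ((γ^2) ^ k / (k ! : ℝ) * (charlier (γ^2) u k * charlier (γ^2) v k)) := by
      intro k
      simp only [hpeven, neg_sq, hsq, hgam]
      ring
    constructor
    · apply Summable.congr ((charlier_orth_abs (γ^2) ha u v).mul_left
        |((-γ) ^ u / Real.sqrt (u.factorial : ℝ)) * ((-γ) ^ v / Real.sqrt (v.factorial : ℝ))|)
      intro k
      rw [← abs_mul, ← hF k]
    · rw [tsum_congr hF, tsum_mul_left, charlier_orth_tsum (γ^2) hane u v]
      rcases eq_or_ne v u with he | hne
      · subst he
        rw [if_pos rfl, if_pos rfl]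
        have h1 : (-γ) ^ v * (-γ) ^ v = (γ ^ 2) ^ v := by
          rw [← mul_pow, neg_mul_neg, ← sq]
        have h2 : Real.sqrt (v.factorial : ℝ) * Real.sqrt (v.factorial : ℝ) = (v ! : ℝ) :=
          Real.mul_self_sqrt (by positivity)
        have hpv : ((γ:ℝ) ^ 2) ^ v ≠ 0 := pow_ne_zero _ hane
        have hfv : ((v ! : ℕ) : ℝ) ≠ 0 := Nat.cast_ne_zero.2 (Nat.factorial_ne_zero v)
        have hAA : ((-γ) ^ v / Real.sqrt (v.factorial : ℝ))
            * ((-γ) ^ v / Real.sqrt (v.factorial : ℝ)) = (γ ^ 2) ^ v / (v ! : ℝ) := by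
          rw [_root_.div_mul_div_comm, h1, h2]
        rw [hAA]
        field_simp
        try ring
      · rw [if_neg hne, if_neg (by omega : ¬ (2*v = 2*u))]
        ring
  -- case 2 : n = 2u, m = 2v+1 (mixed, everything vanishes)
  · have hzero : ∀ k : ℕ, (p (2*u) (Real.sqrt k) * p (2*v+1) (Real.sqrt k)
        + p (2*u) (-Real.sqrt k) * p (2*v+1) (-Real.sqrt k)) = 0 := by
      intro k
      simp only [hpeven, hpodd, neg_sq]
      ring
    constructor
    · refine Summable.congr summable_zero fun k => ?_
      rw [hzero k, mul_zero, abs_zero]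
    · have hz' : ∀ k : ℕ, γ ^ (2 * k) / (2 * (k.factorial : ℝ)) *
          (p (2*u) (Real.sqrt k) * p (2*v+1) (Real.sqrt k)
            + p (2*u) (-Real.sqrt k) * p (2*v+1) (-Real.sqrt k)) = 0 := by
        intro k; rw [hzero k, mul_zero]
      rw [tsum_congr hz', tsum_zero, if_neg (by omega : ¬ (2*v+1 = 2*u)), mul_zero]
  -- case 3 : n = 2u+1, m = 2v (mixed)
  · have hzero : ∀ k : ℕ, (p (2*u+1) (Real.sqrt k) * p (2*v) (Real.sqrt k)
        + p (2*u+1) (-Real.sqrt k) * p (2*v) (-Real.sqrt k)) = 0 := by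
      intro k
      simp only [hpeven, hpodd, neg_sq]
      ring
    constructor
    · refine Summable.congr summable_zero fun k => ?_
      rw [hzero k, mul_zero, abs_zero]
    · have hz' : ∀ k : ℕ, γ ^ (2 * k) / (2 * (k.factorial : ℝ)) *
          (p (2*u+1) (Real.sqrt k) * p (2*v) (Real.sqrt k)
            + p (2*u+1) (-Real.sqrt k) * p (2*v) (-Real.sqrt k)) = 0 := by
        intro k; rw [hzero k, mul_zero]
      rw [tsum_congr hz', tsum_zero, if_neg (by omega : ¬ (2*v = 2*u+1)), mul_zero]
  -- case 4 : n = 2u+1, m = 2v+1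
  · set F : ℕ → ℝ := fun k => γ ^ (2 * k) / (2 * (k.factorial : ℝ)) *
        (p (2*u+1) (Real.sqrt k) * p (2*v+1) (Real.sqrt k)
          + p (2*u+1) (-Real.sqrt k) * p (2*v+1) (-Real.sqrt k)) with hFdef
    have hF0 : F 0 = 0 := by
      simp only [hFdef, hpodd]
      norm_num
    have hFs : ∀ k : ℕ, F (k + 1) =
        (((-γ) ^ ((u:ℤ) - 1) / Real.sqrt (u.factorial : ℝ))
          * ((-γ) ^ ((v:ℤ) - 1) / Real.sqrt (v.factorial : ℝ)) * γ^2) *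
        ((γ^2) ^ k / (k ! : ℝ) * (charlier (γ^2) u k * charlier (γ^2) v k)) := by
      intro k
      have hfac : (((k+1) ! : ℕ) : ℝ) = ((k:ℝ) + 1) * (k ! : ℝ) := by
        rw [Nat.factorial_succ]; push_cast; ring
      have hk1 : ((k:ℝ) + 1) ≠ 0 := by positivity
      have hkf : ((k ! : ℕ) : ℝ) ≠ 0 := Nat.cast_ne_zero.2 (Nat.factorial_ne_zero k)
      have hsu : Real.sqrt (u.factorial : ℝ) ≠ 0 :=
        ne_of_gt (Real.sqrt_pos.2 (by exact_mod_cast Nat.factorial_pos u))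
      have hsv : Real.sqrt (v.factorial : ℝ) ≠ 0 :=
        ne_of_gt (Real.sqrt_pos.2 (by exact_mod_cast Nat.factorial_pos v))
      have hps : ∀ x : ℝ, x ^ 2 = ((k:ℝ) + 1) →
          p (2*u+1) x * p (2*v+1) x = ((k:ℝ) + 1) *
            (((-γ) ^ ((u:ℤ) - 1) / Real.sqrt (u.factorial : ℝ))
              * ((-γ) ^ ((v:ℤ) - 1) / Real.sqrt (v.factorial : ℝ))
              * (charlier (γ^2) u k * charlier (γ^2) v k)) := by
        intro x hx
        rw [hpodd, hpodd]
        have hx1 : x ^ 2 - 1 = ((k:ℕ) : ℝ) := by rw [hx]; push_cast; ring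
        rw [hx1]
        linear_combination (((-γ) ^ ((u:ℤ) - 1) / Real.sqrt (u.factorial : ℝ))
          * ((-γ) ^ ((v:ℤ) - 1) / Real.sqrt (v.factorial : ℝ))
          * charlier (γ^2) u ((k:ℕ):ℝ) * charlier (γ^2) v ((k:ℕ):ℝ)) * hx
      have hx2 : (Real.sqrt ((k+1 : ℕ))) ^ 2 = ((k:ℝ) + 1) := by
        rw [hsq (k+1)]; push_cast; ring
      have hx2' : (-Real.sqrt ((k+1 : ℕ))) ^ 2 = ((k:ℝ) + 1) := by rw [neg_sq]; exact hx2
      simp only [hFdef]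
      rw [hps _ hx2, hps _ hx2', hgam, hfac]
      field_simp
      ring
    have habs : Summable (fun k : ℕ => |F k|) := by
      rw [← summable_nat_add_iff 1]
      apply Summable.congr ((charlier_orth_abs (γ^2) ha u v).mul_left
        |((-γ) ^ ((u:ℤ) - 1) / Real.sqrt (u.factorial : ℝ))
          * ((-γ) ^ ((v:ℤ) - 1) / Real.sqrt (v.factorial : ℝ)) * γ^2|)
      intro k
      rw [← abs_mul, ← hFs k]
    constructor
    · exact habs
    · have hsumF : Summable F := habs.of_abs
      rw [Summable.tsum_eq_zero_add hsumF, hF0, zero_add, tsum_congr hFs, tsum_mul_left,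
        charlier_orth_tsum (γ^2) hane u v]
      rcases eq_or_ne v u with he | hne
      · subst he
        rw [if_pos rfl, if_pos rfl]
        have hng : (-γ) ≠ 0 := neg_ne_zero.2 hγ
        have hz : (-γ) ^ ((v:ℤ) - 1) * (-γ) ^ ((v:ℤ) - 1) = (γ^2) ^ ((v:ℤ) - 1) := by
          rw [← mul_zpow, neg_mul_neg, ← sq]
        have hz2 : ((γ:ℝ)^2) ^ ((v:ℤ) - 1) * (γ^2) = ((γ:ℝ)^2) ^ (v : ℕ) := by
          have h := (zpow_add₀ hane ((v:ℤ) - 1) 1).symm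
          simpa using h
        have h2 : Real.sqrt (v.factorial : ℝ) * Real.sqrt (v.factorial : ℝ) = (v ! : ℝ) :=
          Real.mul_self_sqrt (by positivity)
        have hpv : ((γ:ℝ) ^ 2) ^ v ≠ 0 := pow_ne_zero _ hane
        have hfv : ((v ! : ℕ) : ℝ) ≠ 0 := Nat.cast_ne_zero.2 (Nat.factorial_ne_zero v)
        rw [_root_.div_mul_div_comm, hz, h2]
        field_simp
        linear_combination hz2
      · rw [if_neg hne, if_neg (by omega : ¬ (2*v+1 = 2*u+1))]
        ring
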